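/- In the setting X = A ∪ B with the standing hypotheses, for every u < v the inequality ℓ_{(X,φ)}(u,v) ≤ ℓ_{(A,φ|A)}(u,v) + ℓ_{(B,φ|B)}(u,v) holds. -/
import Mathlib

/-- The relative size function: `sizeFunOn S φ u v` is the number of connected components
of the sublevel set `S_v = S ∩ {φ ≤ v}` containing at least one point of
`S_u = S ∩ {φ ≤ u}`. -/
noncomputable def sizeFunOn {X : Type*} [TopologicalSpace X] (S : Set X) (φ : X → ℝ)
    (u v : ℝ) : ℕ :=
  Set.ncard {C : Set ↥(S ∩ {x : X | φ x ≤ v}) |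
    ∃ p : ↥(S ∩ {x : X | φ x ≤ v}), φ (p : X) ≤ u ∧ C = connectedComponent p}

open Set

/-- If `S` is closed in a compact space and `↥S` is locally connected, then the collection of
connected components of `S ∩ {φ ≤ v}` meeting `S ∩ {φ ≤ u}` is finite, for `u < v`. -/
lemma finite_components_aux {X : Type*} [TopologicalSpace X] [CompactSpace X]
    {S : Set X} (hS : IsClosed S) [LocallyConnectedSpace ↥S]
    {φ : X → ℝ} (hφ : Continuous φ) {u v : ℝ} (huv : u < v) :
    {C : Set ↥(S ∩ {x : X | φ x ≤ v}) |
      ∃ p : ↥(S ∩ {x : X | φ x ≤ v}), φ (p : X) ≤ u ∧ C = connectedComponent p}.Finite := by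
  classical
  set Y := (S ∩ {x : X | φ x ≤ v} : Set X) with hY
  haveI : CompactSpace ↥Y :=
    isCompact_iff_compactSpace.mp ((hS.inter (isClosed_le hφ continuous_const)).isCompact)
  set K : Set ↥Y := {p : ↥Y | φ (p : X) ≤ u} with hK
  have hKc : IsCompact K :=
    (isClosed_le (hφ.comp continuous_subtype_val) continuous_const).isCompact
  have key : ∀ p ∈ K, ∃ V : Set ↥Y, IsOpen V ∧ p ∈ V ∧
      ∀ q ∈ V, connectedComponent q = connectedComponent p := by
    intro p hp
    set s : ↥S := ⟨(p : X), p.2.1⟩ with hs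
    set W : Set ↥S := {q : ↥S | φ (q : X) < v} with hW
    have hWopen : IsOpen W := isOpen_lt (hφ.comp continuous_subtype_val) continuous_const
    have hsW : s ∈ W := lt_of_le_of_lt hp huv
    set U := connectedComponentIn W s with hU
    have hUopen : IsOpen U := hWopen.connectedComponentIn
    have hUconn : IsPreconnected U :=
      (isConnected_connectedComponentIn_iff.mpr hsW).isPreconnected
    have hUsub : U ⊆ W := connectedComponentIn_subset W s
    have hsU : s ∈ U := mem_connectedComponentIn hsW
    set ι : ↥Y → ↥S := fun q => ⟨(q : X), q.2.1⟩ with hι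
    have hιc : Continuous ι := Continuous.subtype_mk continuous_subtype_val _
    refine ⟨ι ⁻¹' U, hUopen.preimage hιc, hsU, ?_⟩
    have himg : (Subtype.val '' (ι ⁻¹' U) : Set X) = Subtype.val '' U := by
      ext x
      constructor
      · rintro ⟨y, hy, rfl⟩; exact ⟨ι y, hy, rfl⟩
      · rintro ⟨y, hy, rfl⟩
        have hylt : φ (y : X) < v := hUsub hy
        have hyY : (y : X) ∈ Y := ⟨y.2, le_of_lt hylt⟩
        refine ⟨⟨(y : X), hyY⟩, ?_, rfl⟩
        show ι ⟨(y : X), hyY⟩ ∈ U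
        have : ι ⟨(y : X), hyY⟩ = y := Subtype.ext rfl
        rwa [this]
    have hpreV : IsPreconnected (ι ⁻¹' U) := by
      rw [← Topology.IsInducing.subtypeVal.isPreconnected_image, himg]
      exact Topology.IsInducing.subtypeVal.isPreconnected_image.mpr hUconn
    intro q hq
    have hsub : ι ⁻¹' U ⊆ connectedComponent p := hpreV.subset_connectedComponent hsU
    exact (connectedComponent_eq (hsub hq)).symm
  choose! V hVopen hVmem hVconst using key
  obtain ⟨t, htK, hcover⟩ :=
    hKc.elim_nhds_subcover V (fun p hp => (hVopen p hp).mem_nhds (hVmem p hp))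
  refine Set.Finite.subset (t.finite_toSet.image connectedComponent) ?_
  rintro C ⟨p, hpu, rfl⟩
  have hpK : p ∈ K := hpu
  obtain ⟨x, hxt, hpx⟩ := Set.mem_iUnion₂.mp (hcover hpK)
  exact ⟨x, hxt, (hVconst x (htK x (Finset.mem_coe.mpr hxt)) p hpx).symm⟩

/-- Pushing equality of connected components from a subtype to the ambient sublevel set. -/
lemma comp_push {X : Type*} [TopologicalSpace X] {S : Set X} {φ : X → ℝ} {v : ℝ}
    {q₁ q₂ : ↥(S ∩ {x : X | φ x ≤ v})} {p₁ p₂ : ↥((Set.univ : Set X) ∩ {x : X | φ x ≤ v})}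
    (h1 : (q₁ : X) = (p₁ : X)) (h2 : (q₂ : X) = (p₂ : X))
    (h : connectedComponent q₁ = connectedComponent q₂) :
    connectedComponent p₁ = connectedComponent p₂ := by
  set j : ↥(S ∩ {x : X | φ x ≤ v}) → ↥((Set.univ : Set X) ∩ {x : X | φ x ≤ v}) :=
    fun q => ⟨(q : X), ⟨Set.mem_univ _, q.2.2⟩⟩ with hj
  have hjc : Continuous j := Continuous.subtype_mk continuous_subtype_val _
  have hT : IsPreconnected (j '' connectedComponent q₁) :=
    isPreconnected_connectedComponent.image j hjc.continuousOn
  have hp1 : p₁ ∈ j '' connectedComponent q₁ :=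
    ⟨q₁, mem_connectedComponent, Subtype.ext h1⟩
  have hp2 : p₂ ∈ j '' connectedComponent q₁ :=
    ⟨q₂, by rw [h]; exact mem_connectedComponent, Subtype.ext h2⟩
  have hsub : j '' connectedComponent q₁ ⊆ connectedComponent p₁ :=
    hT.subset_connectedComponent hp1
  exact connectedComponent_eq (hsub hp2)

/-- for `X = A ∪ B` with the standing hypotheses (X compact Hausdorff
locally connected, A, B closed locally connected with `X = int A ∪ int B`, `A ∩ B`
locally connected, φ continuous), for every `u < v`,
`ℓ_{(X,φ)}(u,v) ≤ ℓ_{(A,φ|A)}(u,v) + ℓ_{(B,φ|B)}(u,v)`. -/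
theorem sizeFun_union_le {X : Type*} [TopologicalSpace X] [CompactSpace X] [T2Space X]
    [LocallyConnectedSpace X] [Nonempty X]
    {A B : Set X} (hA : IsClosed A) (hB : IsClosed B) (hUnion : A ∪ B = Set.univ)
    (hInt : interior A ∪ interior B = Set.univ)
    [LocallyConnectedSpace ↥A] [LocallyConnectedSpace ↥B]
    [LocallyConnectedSpace ↥(A ∩ B)]
    {φ : X → ℝ} (hφ : Continuous φ) {u v : ℝ} (huv : u < v) :
    sizeFunOn Set.univ φ u v ≤ sizeFunOn A φ u v + sizeFunOn B φ u v := by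
  classical
  have hAfin := finite_components_aux hA hφ huv
  have hBfin := finite_components_aux hB hφ huv
  set SU := {C : Set ↥((Set.univ : Set X) ∩ {x : X | φ x ≤ v}) |
    ∃ p : ↥((Set.univ : Set X) ∩ {x : X | φ x ≤ v}),
      φ (p : X) ≤ u ∧ C = connectedComponent p} with hSU
  set SA := {C : Set ↥(A ∩ {x : X | φ x ≤ v}) |
    ∃ p : ↥(A ∩ {x : X | φ x ≤ v}), φ (p : X) ≤ u ∧ C = connectedComponent p} with hSA
  set SB := {C : Set ↥(B ∩ {x : X | φ x ≤ v}) |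
    ∃ p : ↥(B ∩ {x : X | φ x ≤ v}), φ (p : X) ≤ u ∧ C = connectedComponent p} with hSB
  haveI : Finite ↥SA := hAfin.to_subtype
  haveI : Finite ↥SB := hBfin.to_subtype
  have exmem : ∀ C : ↥SU, ∃ p : ↥((Set.univ : Set X) ∩ {x : X | φ x ≤ v}),
      φ (p : X) ≤ u ∧ (C : Set _) = connectedComponent p := fun C => C.2
  choose p hp1 hp2 using exmem
  have hab : ∀ C : ↥SU, (p C : X) ∈ A ∨ (p C : X) ∈ B := fun C => by
    have h : (p C : X) ∈ A ∪ B := by rw [hUnion]; exact Set.mem_univ _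
    exact h
  let f : ↥SU → ↥SA ⊕ ↥SB := fun C =>
    if h : (p C : X) ∈ A then
      Sum.inl ⟨connectedComponent (⟨(p C : X), h, (p C).2.2⟩ : ↥(A ∩ {x : X | φ x ≤ v})),
        ⟨_, hp1 C, rfl⟩⟩
    else
      Sum.inr ⟨connectedComponent
        (⟨(p C : X), (hab C).resolve_left h, (p C).2.2⟩ : ↥(B ∩ {x : X | φ x ≤ v})),
        ⟨_, hp1 C, rfl⟩⟩
  have hf : Function.Injective f := by
    intro C₁ C₂ hEq
    have key : connectedComponent (p C₁) = connectedComponent (p C₂) := by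
      by_cases h1 : (p C₁ : X) ∈ A <;> by_cases h2 : (p C₂ : X) ∈ A <;>
        simp only [f, h1, h2, dif_pos, dif_neg, not_false_iff] at hEq
      · refine comp_push ?_ ?_ (Subtype.ext_iff.mp (Sum.inl.inj hEq)) <;> rfl
      · exact absurd hEq (by simp)
      · exact absurd hEq (by simp)
      · refine comp_push ?_ ?_ (Subtype.ext_iff.mp (Sum.inr.inj hEq)) <;> rfl
    apply Subtype.ext
    rw [hp2 C₁, hp2 C₂, key]
  have hcard : Nat.card ↥SU ≤ Nat.card (↥SA ⊕ ↥SB) :=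
    Nat.card_le_card_of_injective f hf
  rw [Nat.card_sum] at hcard
  unfold sizeFunOn
  rw [← hSU, ← hSA, ← hSB]
  simpa [← Nat.card_coe_set_eq] using hcard
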